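/- Let σ be a permutation of {0,1,...,N-1} and X(σ) = {(m/N, σ(m)/N) : m = 0,...,N-1} ⊆ [0,1)². Then L₂-periodic(X(σ))² − 4·L₂-extreme(X(σ))² = (N²+1)/(18N²), where L₂-periodic(X)² = −N²/9 + ∑_{x,y∈X} ∏_{k=1}^2 (1/2 − |x_k−y_k| + |x_k−y_k|²) and L₂-extreme(X)² = N²/144 − (N/2)·∑_{x∈X} ∏_{k=1}^2 x_k(1−x_k) + ∑_{x,y∈X} ∏_{k=1}^2 (min(x_k,y_k) − x_k y_k). -/

import Mathlib

open Finset

section helpers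

lemma pt_key (a b : ℝ) :
    (1:ℝ) / 2 - |a - b| + |a - b| ^ 2
      = 2 * (min a b - a * b) + (a - 1/2) ^ 2 + (b - 1/2) ^ 2 := by
  rcases le_total a b with h | h
  · rw [abs_of_nonpos (by linarith), min_eq_left h]; ring
  · rw [abs_of_nonneg (by linarith), min_eq_right h]; ring

lemma gauss_real (n : ℕ) : ∑ i ∈ Finset.range n, (i : ℝ) = n * (n - 1) / 2 := by
  induction n with
  | zero => simp
  | succ k ih => rw [Finset.sum_range_succ, ih]; push_cast; ring

lemma summin (N n : ℕ) (h : n < N) :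
    ∑ m ∈ Finset.range N, ((min m n : ℕ) : ℝ) = n * (n - 1) / 2 + n * (N - n) := by
  rw [Finset.range_eq_Ico, ← Finset.sum_Ico_consecutive _ (Nat.zero_le n) h.le]
  have h1 : ∑ m ∈ Finset.Ico 0 n, ((min m n : ℕ) : ℝ) = ∑ m ∈ Finset.range n, (m : ℝ) := by
    rw [← Finset.range_eq_Ico]
    exact Finset.sum_congr rfl fun m hm => by
      rw [min_eq_left (Finset.mem_range.mp hm).le]
  have h2 : ∑ m ∈ Finset.Ico n N, ((min m n : ℕ) : ℝ) = ((N : ℝ) - n) * n := by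
    rw [Finset.sum_congr rfl fun m hm => by
      rw [min_eq_right (Finset.mem_Ico.mp hm).1]]
    rw [Finset.sum_const, Nat.card_Ico, nsmul_eq_mul]
    rw [Nat.cast_sub h.le]
  rw [h1, h2, gauss_real]
  ring

lemma row_sum (N : ℕ) (hN : 0 < N) (n : Fin N) :
    ∑ m : Fin N, (min ((m : ℝ) / N) ((n : ℝ) / N) - (m : ℝ) / N * ((n : ℝ) / N))
      = (N : ℝ) / 2 * ((n : ℝ) / N * (1 - (n : ℝ) / N)) := by
  have hN' : (0:ℝ) < N := by exact_mod_cast hN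
  have hmin : ∀ m : ℕ, min ((m : ℝ) / N) ((n : ℝ) / N) = ((min m (n : ℕ) : ℕ) : ℝ) / N := by
    intro m
    rw [min_div_div_right hN'.le, Nat.cast_min]
  calc ∑ m : Fin N, (min ((m : ℝ) / N) ((n : ℝ) / N) - (m : ℝ) / N * ((n : ℝ) / N))
      = ∑ m ∈ Finset.range N, (((min m (n:ℕ) : ℕ) : ℝ) / N - (m : ℝ) / N * ((n : ℝ) / N)) := by
        rw [← Fin.sum_univ_eq_sum_range (fun m : ℕ => ((min m (n:ℕ) : ℕ) : ℝ) / N - (m : ℝ) / N * ((n : ℝ) / N)) N]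
        exact Finset.sum_congr rfl fun m _ => by rw [hmin]
    _ = (∑ m ∈ Finset.range N, ((min m (n:ℕ) : ℕ) : ℝ)) / N
          - (∑ m ∈ Finset.range N, (m : ℝ)) * ((n : ℝ) / N / N) := by
        rw [Finset.sum_sub_distrib, ← Finset.sum_div]
        congr 1
        rw [Finset.sum_mul]
        exact Finset.sum_congr rfl fun m _ => by ring
    _ = (N : ℝ) / 2 * ((n : ℝ) / N * (1 - (n : ℝ) / N)) := by
        rw [summin N n n.isLt, gauss_real]
        have hn : ((n : Fin N) : ℝ) = ((n : ℕ) : ℝ) := rfl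
        field_simp
        ring

lemma sq_real (n : ℕ) : ∑ i ∈ Finset.range n, (i : ℝ) ^ 2 = n * (n - 1) * (2 * n - 1) / 6 := by
  induction n with
  | zero => simp
  | succ k ih => rw [Finset.sum_range_succ, ih]; push_cast; ring

lemma sumw (N : ℕ) (hN : 0 < N) :
    ∑ i : Fin N, ((i : ℝ) / N * (1 - (i : ℝ) / N)) = ((N : ℝ) ^ 2 - 1) / (6 * N) := by
  have hN' : (0:ℝ) < N := by exact_mod_cast hN
  have hsq := sq_real N
  calc ∑ i : Fin N, ((i : ℝ) / N * (1 - (i : ℝ) / N))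
      = ∑ i ∈ Finset.range N, ((i : ℝ) / N * (1 - (i : ℝ) / N)) :=
        Fin.sum_univ_eq_sum_range (fun i : ℕ => (i : ℝ) / N * (1 - (i : ℝ) / N)) N
    _ = ∑ i ∈ Finset.range N, ((i : ℝ) / N - (i:ℝ)^2 / N^2) := by
        exact Finset.sum_congr rfl fun i _ => by field_simp
    _ = (∑ i ∈ Finset.range N, (i : ℝ)) / N - (∑ i ∈ Finset.range N, (i : ℝ)^2) / N^2 := by
        rw [Finset.sum_sub_distrib, Finset.sum_div, Finset.sum_div]
    _ = ((N : ℝ) ^ 2 - 1) / (6 * N) := by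
        rw [gauss_real, hsq]
        field_simp
        ring

lemma aux_sum {ι : Type*} [Fintype ι] (g h : ι → ι → ℝ) (u v rg rh : ι → ℝ)
    (hgrow : ∀ m, ∑ n, g m n = rg m) (hgcol : ∀ n, ∑ m, g m n = rg n)
    (hhrow : ∀ m, ∑ n, h m n = rh m) (hhcol : ∀ n, ∑ m, h m n = rh n) :
    ∑ m, ∑ n, (4 * g m n * h m n + 2 * g m n * (v m + v n) + 2 * h m n * (u m + u n)
        + (u m + u n) * (v m + v n))
      = 4 * (∑ m, ∑ n, g m n * h m n) + 4 * (∑ i, rg i * v i) + 4 * (∑ i, rh i * u i)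
        + 2 * (Fintype.card ι : ℝ) * (∑ i, u i * v i)
        + 2 * (∑ i, u i) * (∑ i, v i) := by
  have h1 : ∑ m, ∑ n, (4 * (g m n * h m n)) = 4 * ∑ m, ∑ n, g m n * h m n := by
    rw [Finset.mul_sum]
    exact sum_congr rfl fun m _ => by rw [Finset.mul_sum]
  have h2 : ∑ m, ∑ n, (2 * (g m n * v m)) = 2 * ∑ i, rg i * v i := by
    rw [Finset.mul_sum]
    refine sum_congr rfl fun m _ => ?_
    calc ∑ n, 2 * (g m n * v m) = (∑ n, g m n) * (2 * v m) := by
          rw [Finset.sum_mul]; exact sum_congr rfl fun n _ => by ring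
      _ = 2 * (rg m * v m) := by rw [hgrow m]; ring
  have h3 : ∑ m, ∑ n, (2 * (g m n * v n)) = 2 * ∑ i, rg i * v i := by
    rw [Finset.sum_comm, Finset.mul_sum]
    refine sum_congr rfl fun n _ => ?_
    calc ∑ m, 2 * (g m n * v n) = (∑ m, g m n) * (2 * v n) := by
          rw [Finset.sum_mul]; exact sum_congr rfl fun m _ => by ring
      _ = 2 * (rg n * v n) := by rw [hgcol n]; ring
  have h4 : ∑ m, ∑ n, (2 * (h m n * u m)) = 2 * ∑ i, rh i * u i := by
    rw [Finset.mul_sum]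
    refine sum_congr rfl fun m _ => ?_
    calc ∑ n, 2 * (h m n * u m) = (∑ n, h m n) * (2 * u m) := by
          rw [Finset.sum_mul]; exact sum_congr rfl fun n _ => by ring
      _ = 2 * (rh m * u m) := by rw [hhrow m]; ring
  have h5 : ∑ m, ∑ n, (2 * (h m n * u n)) = 2 * ∑ i, rh i * u i := by
    rw [Finset.sum_comm, Finset.mul_sum]
    refine sum_congr rfl fun n _ => ?_
    calc ∑ m, 2 * (h m n * u n) = (∑ m, h m n) * (2 * u n) := by
          rw [Finset.sum_mul]; exact sum_congr rfl fun m _ => by ring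
      _ = 2 * (rh n * u n) := by rw [hhcol n]; ring
  have h6 : ∑ m : ι, ∑ _n : ι, (u m * v m) = (Fintype.card ι : ℝ) * ∑ i, u i * v i := by
    rw [Finset.mul_sum]
    exact sum_congr rfl fun m _ => by
      rw [Finset.sum_const, nsmul_eq_mul, Finset.card_univ]
  have h7 : ∑ m : ι, ∑ n : ι, (u m * v n) = (∑ i, u i) * (∑ i, v i) :=
    (Finset.sum_mul_sum _ _ _ _).symm
  have h8 : ∑ m : ι, ∑ n : ι, (u n * v m) = (∑ i, u i) * (∑ i, v i) := by
    rw [Finset.sum_comm]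
    exact (Finset.sum_mul_sum _ _ _ _).symm
  have h9 : ∑ _m : ι, ∑ n : ι, (u n * v n) = (Fintype.card ι : ℝ) * ∑ i, u i * v i := by
    rw [Finset.sum_const, nsmul_eq_mul, Finset.card_univ]
  calc ∑ m, ∑ n, (4 * g m n * h m n + 2 * g m n * (v m + v n) + 2 * h m n * (u m + u n)
        + (u m + u n) * (v m + v n))
      = ∑ m, ∑ n, (4 * (g m n * h m n) + (2 * (g m n * v m) + (2 * (g m n * v n)
          + (2 * (h m n * u m) + (2 * (h m n * u n) + (u m * v m + (u m * v n
          + (u n * v m + u n * v n)))))))) :=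
        sum_congr rfl fun m _ => sum_congr rfl fun n _ => by ring
    _ = _ := by
        simp only [Finset.sum_add_distrib]
        rw [h1, h2, h3, h4, h5, h6, h7, h8, h9]
        ring

end helpers

theorem stmt_9 (N : ℕ) (hN : 0 < N) (σ : Equiv.Perm (Fin N)) :
    (-(N : ℝ) ^ 2 / 9 +
        ∑ m : Fin N, ∑ n : Fin N,
          ((1 : ℝ) / 2 - |(m : ℝ) / N - (n : ℝ) / N| + |(m : ℝ) / N - (n : ℝ) / N| ^ 2) *
            ((1 : ℝ) / 2 - |(σ m : ℝ) / N - (σ n : ℝ) / N| +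
              |(σ m : ℝ) / N - (σ n : ℝ) / N| ^ 2)) -
      4 * ((N : ℝ) ^ 2 / 144 -
          ((N : ℝ) / 2) *
            ∑ m : Fin N,
              ((m : ℝ) / N * (1 - (m : ℝ) / N)) * ((σ m : ℝ) / N * (1 - (σ m : ℝ) / N)) +
          ∑ m : Fin N, ∑ n : Fin N,
            (min ((m : ℝ) / N) ((n : ℝ) / N) - (m : ℝ) / N * ((n : ℝ) / N)) *
              (min ((σ m : ℝ) / N) ((σ n : ℝ) / N) - (σ m : ℝ) / N * ((σ n : ℝ) / N))) =
      ((N : ℝ) ^ 2 + 1) / (18 * (N : ℝ) ^ 2) := by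
  have hN' : (0:ℝ) < N := by exact_mod_cast hN
  have hNne : (N:ℝ) ≠ 0 := ne_of_gt hN'
  have hcol : ∀ n : Fin N,
      ∑ m : Fin N, (min ((m:ℝ)/N) ((n:ℝ)/N) - (m:ℝ)/N * ((n:ℝ)/N))
        = (N:ℝ)/2 * ((n:ℝ)/N * (1 - (n:ℝ)/N)) := row_sum N hN
  have hrow : ∀ m : Fin N,
      ∑ n : Fin N, (min ((m:ℝ)/N) ((n:ℝ)/N) - (m:ℝ)/N * ((n:ℝ)/N))
        = (N:ℝ)/2 * ((m:ℝ)/N * (1 - (m:ℝ)/N)) := by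
    intro m
    calc ∑ n : Fin N, (min ((m:ℝ)/N) ((n:ℝ)/N) - (m:ℝ)/N * ((n:ℝ)/N))
        = ∑ n : Fin N, (min ((n:ℝ)/N) ((m:ℝ)/N) - (n:ℝ)/N * ((m:ℝ)/N)) :=
          Finset.sum_congr rfl fun n _ => by rw [min_comm]; ring
      _ = _ := row_sum N hN m
  have hrowσ : ∀ m : Fin N,
      ∑ n : Fin N, (min ((σ m:ℝ)/N) ((σ n:ℝ)/N) - (σ m:ℝ)/N * ((σ n:ℝ)/N))
        = (N:ℝ)/2 * ((σ m:ℝ)/N * (1 - (σ m:ℝ)/N)) := by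
    intro m
    calc ∑ n : Fin N, (min ((σ m:ℝ)/N) ((σ n:ℝ)/N) - (σ m:ℝ)/N * ((σ n:ℝ)/N))
        = ∑ k : Fin N, (min ((σ m:ℝ)/N) ((k:ℝ)/N) - (σ m:ℝ)/N * ((k:ℝ)/N)) :=
          Equiv.sum_comp σ (fun k => min ((σ m:ℝ)/N) ((k:ℝ)/N) - (σ m:ℝ)/N * ((k:ℝ)/N))
      _ = _ := hrow (σ m)
  have hcolσ : ∀ n : Fin N,
      ∑ m : Fin N, (min ((σ m:ℝ)/N) ((σ n:ℝ)/N) - (σ m:ℝ)/N * ((σ n:ℝ)/N))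
        = (N:ℝ)/2 * ((σ n:ℝ)/N * (1 - (σ n:ℝ)/N)) := by
    intro n
    calc ∑ m : Fin N, (min ((σ m:ℝ)/N) ((σ n:ℝ)/N) - (σ m:ℝ)/N * ((σ n:ℝ)/N))
        = ∑ k : Fin N, (min ((k:ℝ)/N) ((σ n:ℝ)/N) - (k:ℝ)/N * ((σ n:ℝ)/N)) :=
          Equiv.sum_comp σ (fun k => min ((k:ℝ)/N) ((σ n:ℝ)/N) - (k:ℝ)/N * ((σ n:ℝ)/N))
      _ = _ := hcol (σ n)
  have MAIN : ∑ m : Fin N, ∑ n : Fin N,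
      (4 * (min ((m:ℝ)/N) ((n:ℝ)/N) - (m:ℝ)/N * ((n:ℝ)/N))
          * (min ((σ m:ℝ)/N) ((σ n:ℝ)/N) - (σ m:ℝ)/N * ((σ n:ℝ)/N))
        + 2 * (min ((m:ℝ)/N) ((n:ℝ)/N) - (m:ℝ)/N * ((n:ℝ)/N))
          * (((σ m:ℝ)/N - 1/2)^2 + ((σ n:ℝ)/N - 1/2)^2)
        + 2 * (min ((σ m:ℝ)/N) ((σ n:ℝ)/N) - (σ m:ℝ)/N * ((σ n:ℝ)/N))
          * (((m:ℝ)/N - 1/2)^2 + ((n:ℝ)/N - 1/2)^2)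
        + (((m:ℝ)/N - 1/2)^2 + ((n:ℝ)/N - 1/2)^2)
          * (((σ m:ℝ)/N - 1/2)^2 + ((σ n:ℝ)/N - 1/2)^2))
      = 4 * (∑ m : Fin N, ∑ n : Fin N,
            (min ((m : ℝ) / N) ((n : ℝ) / N) - (m : ℝ) / N * ((n : ℝ) / N)) *
              (min ((σ m : ℝ) / N) ((σ n : ℝ) / N) - (σ m : ℝ) / N * ((σ n : ℝ) / N)))
        + 4 * (∑ i : Fin N, ((N:ℝ)/2 * ((i:ℝ)/N * (1 - (i:ℝ)/N))) * ((σ i:ℝ)/N - 1/2)^2)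
        + 4 * (∑ i : Fin N, ((N:ℝ)/2 * ((σ i:ℝ)/N * (1 - (σ i:ℝ)/N))) * ((i:ℝ)/N - 1/2)^2)
        + 2 * (Fintype.card (Fin N) : ℝ) * (∑ i : Fin N, ((i:ℝ)/N - 1/2)^2 * ((σ i:ℝ)/N - 1/2)^2)
        + 2 * (∑ i : Fin N, ((i:ℝ)/N - 1/2)^2) * (∑ i : Fin N, ((σ i:ℝ)/N - 1/2)^2) :=
    aux_sum _ _ _ _ _ _ hrow hcol hrowσ hcolσ
  have step1 : (∑ m : Fin N, ∑ n : Fin N,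
          ((1 : ℝ) / 2 - |(m : ℝ) / N - (n : ℝ) / N| + |(m : ℝ) / N - (n : ℝ) / N| ^ 2) *
            ((1 : ℝ) / 2 - |(σ m : ℝ) / N - (σ n : ℝ) / N| +
              |(σ m : ℝ) / N - (σ n : ℝ) / N| ^ 2))
      = ∑ m : Fin N, ∑ n : Fin N,
      (4 * (min ((m:ℝ)/N) ((n:ℝ)/N) - (m:ℝ)/N * ((n:ℝ)/N))
          * (min ((σ m:ℝ)/N) ((σ n:ℝ)/N) - (σ m:ℝ)/N * ((σ n:ℝ)/N))
        + 2 * (min ((m:ℝ)/N) ((n:ℝ)/N) - (m:ℝ)/N * ((n:ℝ)/N))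
          * (((σ m:ℝ)/N - 1/2)^2 + ((σ n:ℝ)/N - 1/2)^2)
        + 2 * (min ((σ m:ℝ)/N) ((σ n:ℝ)/N) - (σ m:ℝ)/N * ((σ n:ℝ)/N))
          * (((m:ℝ)/N - 1/2)^2 + ((n:ℝ)/N - 1/2)^2)
        + (((m:ℝ)/N - 1/2)^2 + ((n:ℝ)/N - 1/2)^2)
          * (((σ m:ℝ)/N - 1/2)^2 + ((σ n:ℝ)/N - 1/2)^2)) :=
    Finset.sum_congr rfl fun m _ => Finset.sum_congr rfl fun n _ => by
      rw [pt_key ((m:ℝ)/N) ((n:ℝ)/N), pt_key ((σ m:ℝ)/N) ((σ n:ℝ)/N)]; ring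
  have hA := sumw N hN
  have hAσ : ∑ i : Fin N, ((σ i:ℝ)/N * (1 - (σ i:ℝ)/N)) = ((N:ℝ)^2 - 1)/(6*N) := by
    rw [Equiv.sum_comp σ (fun i : Fin N => (i:ℝ)/N * (1 - (i:ℝ)/N))]
    exact hA
  have hS1 : ∑ i : Fin N, ((N:ℝ)/2 * ((i:ℝ)/N * (1 - (i:ℝ)/N))) * ((σ i:ℝ)/N - 1/2)^2
      = (N:ℝ)/2 * (1/4 * (((N:ℝ)^2 - 1)/(6*N))
          - ∑ m : Fin N, ((m : ℝ) / N * (1 - (m : ℝ) / N)) * ((σ m : ℝ) / N * (1 - (σ m : ℝ) / N))) := by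
    calc ∑ i : Fin N, ((N:ℝ)/2 * ((i:ℝ)/N * (1 - (i:ℝ)/N))) * ((σ i:ℝ)/N - 1/2)^2
        = ∑ i : Fin N, ((N:ℝ)/2 * (1/4 * ((i:ℝ)/N * (1 - (i:ℝ)/N))
            - ((i : ℝ) / N * (1 - (i : ℝ) / N)) * ((σ i : ℝ) / N * (1 - (σ i : ℝ) / N)))) :=
          Finset.sum_congr rfl fun i _ => by ring
      _ = (N:ℝ)/2 * (1/4 * (∑ i : Fin N, (i:ℝ)/N * (1 - (i:ℝ)/N))
            - ∑ m : Fin N, ((m : ℝ) / N * (1 - (m : ℝ) / N)) * ((σ m : ℝ) / N * (1 - (σ m : ℝ) / N))) := by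
          rw [← Finset.mul_sum, Finset.sum_sub_distrib, ← Finset.mul_sum]
      _ = _ := by rw [hA]
  have hS2 : ∑ i : Fin N, ((N:ℝ)/2 * ((σ i:ℝ)/N * (1 - (σ i:ℝ)/N))) * ((i:ℝ)/N - 1/2)^2
      = (N:ℝ)/2 * (1/4 * (((N:ℝ)^2 - 1)/(6*N))
          - ∑ m : Fin N, ((m : ℝ) / N * (1 - (m : ℝ) / N)) * ((σ m : ℝ) / N * (1 - (σ m : ℝ) / N))) := by
    calc ∑ i : Fin N, ((N:ℝ)/2 * ((σ i:ℝ)/N * (1 - (σ i:ℝ)/N))) * ((i:ℝ)/N - 1/2)^2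
        = ∑ i : Fin N, ((N:ℝ)/2 * (1/4 * ((σ i:ℝ)/N * (1 - (σ i:ℝ)/N))
            - ((i : ℝ) / N * (1 - (i : ℝ) / N)) * ((σ i : ℝ) / N * (1 - (σ i : ℝ) / N)))) :=
          Finset.sum_congr rfl fun i _ => by ring
      _ = (N:ℝ)/2 * (1/4 * (∑ i : Fin N, (σ i:ℝ)/N * (1 - (σ i:ℝ)/N))
            - ∑ m : Fin N, ((m : ℝ) / N * (1 - (m : ℝ) / N)) * ((σ m : ℝ) / N * (1 - (σ m : ℝ) / N))) := by
          rw [← Finset.mul_sum, Finset.sum_sub_distrib, ← Finset.mul_sum]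
      _ = _ := by rw [hAσ]
  have hS3 : ∑ i : Fin N, ((i:ℝ)/N - 1/2)^2 * ((σ i:ℝ)/N - 1/2)^2
      = (N:ℝ) * (1/16) - 1/4 * (((N:ℝ)^2 - 1)/(6*N)) - 1/4 * (((N:ℝ)^2 - 1)/(6*N))
        + ∑ m : Fin N, ((m : ℝ) / N * (1 - (m : ℝ) / N)) * ((σ m : ℝ) / N * (1 - (σ m : ℝ) / N)) := by
    calc ∑ i : Fin N, ((i:ℝ)/N - 1/2)^2 * ((σ i:ℝ)/N - 1/2)^2
        = ∑ i : Fin N, ((1:ℝ)/16 - 1/4 * ((i:ℝ)/N * (1 - (i:ℝ)/N)) - 1/4 * ((σ i:ℝ)/N * (1 - (σ i:ℝ)/N))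
            + ((i : ℝ) / N * (1 - (i : ℝ) / N)) * ((σ i : ℝ) / N * (1 - (σ i : ℝ) / N))) :=
          Finset.sum_congr rfl fun i _ => by ring
      _ = (∑ _i : Fin N, (1:ℝ)/16) - (∑ i : Fin N, 1/4 * ((i:ℝ)/N * (1 - (i:ℝ)/N)))
            - (∑ i : Fin N, 1/4 * ((σ i:ℝ)/N * (1 - (σ i:ℝ)/N)))
            + ∑ m : Fin N, ((m : ℝ) / N * (1 - (m : ℝ) / N)) * ((σ m : ℝ) / N * (1 - (σ m : ℝ) / N)) := by
          rw [Finset.sum_add_distrib, Finset.sum_sub_distrib, Finset.sum_sub_distrib]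
      _ = _ := by
          rw [← Finset.mul_sum, ← Finset.mul_sum, hA, hAσ, Finset.sum_const, nsmul_eq_mul,
            Finset.card_univ, Fintype.card_fin]
  have hU : ∑ i : Fin N, ((i:ℝ)/N - 1/2)^2 = (N:ℝ) * (1/4) - ((N:ℝ)^2 - 1)/(6*N) := by
    calc ∑ i : Fin N, ((i:ℝ)/N - 1/2)^2
        = ∑ i : Fin N, ((1:ℝ)/4 - (i:ℝ)/N * (1 - (i:ℝ)/N)) :=
          Finset.sum_congr rfl fun i _ => by ring
      _ = (∑ _i : Fin N, (1:ℝ)/4) - ∑ i : Fin N, (i:ℝ)/N * (1 - (i:ℝ)/N) := Finset.sum_sub_distrib _ _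
      _ = _ := by rw [hA, Finset.sum_const, nsmul_eq_mul, Finset.card_univ, Fintype.card_fin]
  have hV : ∑ i : Fin N, ((σ i:ℝ)/N - 1/2)^2 = (N:ℝ) * (1/4) - ((N:ℝ)^2 - 1)/(6*N) := by
    rw [Equiv.sum_comp σ (fun i : Fin N => ((i:ℝ)/N - 1/2)^2)]
    exact hU
  rw [step1, MAIN, hS1, hS2, hS3, hU, hV, Fintype.card_fin]
  field_simp
  ring
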